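/- Fix λ ⊢ n with height h, m ∈ ℕ, and tableaux τ, σ ∈ T_{λ,m}. For a 'count function' κ : ⋃_{t=1}^h ([m]^t × [m]^t) → ℕ satisfying, for each i ≤ h and s ∈ [m], ∑_{t=i}^h ∑_{v,w∈[m]^t, v_i=s} κ(v,w) = (number of entries equal to s in row i of τ) and ∑_{t=i}^h ∑_{v,w∈[m]^t, w_i=s} κ(v,w) = (number of entries equal to s in row i of σ), the number of pairs (τ', σ') with τ' ∼ τ, σ' ∼ σ whose column-pattern count function equals κ is ∏_{t=1}^h (λ_t − λ_{t+1})! / ∏_{v,w∈[m]^t} κ(v,w)! (with λ_{h+1} = 0). -/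

import Mathlib

open Finset

section AuxCounting

open Equiv

-- Lemma C: equal fiber counts gives a permutation
lemma existsPermOfFiberCards {γ β : Type*} [Fintype γ] [DecidableEq β]
    (f g : γ → β)
    (h : ∀ b, Fintype.card {x // f x = b} = Fintype.card {x // g x = b}) :
    ∃ e : Equiv.Perm γ, f = g ∘ e := by
  refine ⟨Equiv.ofFiberEquiv (f := f) (g := g)
    (fun b => Fintype.equivOfCardEq (h b)), ?_⟩
  funext x
  exact (Equiv.ofFiberEquiv_map _ x).symm

-- Lemma D: existence of a function with prescribed fiber cardinalities
lemma existsFunOfFiberCards {γ β : Type*} [Fintype γ] [Fintype β] [DecidableEq β]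
    (κ : β → ℕ) (h : ∑ b, κ b = Fintype.card γ) :
    ∃ g : γ → β, ∀ b, Fintype.card {x // g x = b} = κ b := by
  have e : γ ≃ Σ b : β, Fin (κ b) := by
    apply Fintype.equivOfCardEq
    simp [Fintype.card_sigma, h]
  refine ⟨fun x => (e x).1, fun b => ?_⟩
  have e2 : {x // (e x).1 = b} ≃ Fin (κ b) := by
    refine (e.subtypeEquivOfSubtype (p := fun y : Σ b : β, Fin (κ b) => y.1 = b)).trans ?_
    exact { toFun := fun y => y.2 ▸ y.1.2
            invFun := fun z => ⟨⟨b, z⟩, rfl⟩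
            left_inv := by rintro ⟨⟨b', z⟩, rfl⟩; rfl
            right_inv := by intro z; rfl }
  simp [Fintype.card_congr e2]

-- Lemma B: number of functions with prescribed fiber cardinalities
lemma card_funs_with_fiber_cards {γ β : Type*} [Fintype γ] [DecidableEq γ]
    [Fintype β] [DecidableEq β]
    (κ : β → ℕ) (hκ : ∑ b, κ b = Fintype.card γ) :
    Fintype.card {g : γ → β // ∀ b, Fintype.card {x // g x = b} = κ b}
      * ∏ b, (κ b).factorial = (Fintype.card γ).factorial := by
  classical
  obtain ⟨g₀, hg₀⟩ := existsFunOfFiberCards κ hκ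
  -- the set of functions with the right fiber counts, as a Finset
  set F : Finset (γ → β) :=
    univ.filter (fun g => ∀ b, Fintype.card {x // g x = b} = κ b) with hF
  have hcardF : Fintype.card {g : γ → β // ∀ b, Fintype.card {x // g x = b} = κ b}
      = F.card := by
    rw [hF, Fintype.card_subtype]
  -- stabilizer cardinality
  have hstab : ∀ g ∈ F, (univ.filter (fun σ : Equiv.Perm γ => g₀ ∘ σ = g)).card
      = ∏ b, (κ b).factorial := by
    intro g hg
    rw [hF, mem_filter] at hg
    obtain ⟨e, he⟩ := existsPermOfFiberCards g g₀ (fun b => by rw [hg.2 b, hg₀ b])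
    -- bijection σ ↦ σ * e⁻¹ onto the stabilizer of g₀
    have hbij : (univ.filter (fun σ : Equiv.Perm γ => g₀ ∘ σ = g)).card
        = (univ.filter (fun σ : Equiv.Perm γ => g₀ ∘ σ = g₀)).card := by
      apply Finset.card_bij (fun σ _ => σ * e⁻¹)
      · intro σ hσ
        simp only [mem_filter, mem_univ, true_and] at hσ ⊢
        funext x
        have h1 : g₀ (σ (e⁻¹ x)) = g (e⁻¹ x) := congrFun hσ (e⁻¹ x)
        have h2 : g (e⁻¹ x) = g₀ (e (e⁻¹ x)) := congrFun he (e⁻¹ x)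
        rw [h2] at h1; simpa using h1
      · intro σ₁ h1 σ₂ h2 hh
        have := congrArg (fun σ => σ * e) hh
        simpa using this
      · intro σ' hσ'
        refine ⟨σ' * e, ?_, by simp⟩
        simp only [mem_filter, mem_univ, true_and] at hσ' ⊢
        funext x
        have h1 : g₀ (σ' (e x)) = g₀ (e x) := congrFun hσ' (e x)
        have h2 : g x = g₀ (e x) := congrFun he x
        simpa [← h2] using h1
    rw [hbij]
    have h := DomMulAct.stabilizer_card (α := γ) (ι := β) g₀
    rw [← Fintype.card_subtype, h]
    exact Finset.prod_congr rfl (fun b _ => by rw [hg₀ b])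
  -- total count of permutations fiberwise over F
  have htot : (univ : Finset (Equiv.Perm γ)).card
      = ∑ g ∈ F, (univ.filter (fun σ : Equiv.Perm γ => g₀ ∘ σ = g)).card := by
    apply Finset.card_eq_sum_card_fiberwise
    intro σ _
    rw [hF, mem_coe, mem_filter]
    refine ⟨mem_univ _, fun b => ?_⟩
    rw [← hg₀ b]
    exact Fintype.card_congr ((σ.subtypeEquivOfSubtype (p := fun x => g₀ x = b)))
  rw [Finset.sum_congr rfl hstab, Finset.sum_const, smul_eq_mul] at htot
  rw [hcardF, ← htot, Finset.card_univ, Fintype.card_perm]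
end AuxCounting

section Tableaux

variable (l : ℕ → ℕ) (t : ℕ) (m : ℕ)

/-- The Young shape of the partition `λ = (l 0 ≥ l 1 ≥ ⋯ ≥ l (t-1))` (written
0-based): the cells `(c, r)` with `r < t` and `c < l r` (`c` the column index,
`r` the row index). -/
def YoungShape : Finset (ℕ × ℕ) :=
  (range (l 0) ×ˢ range t).filter (fun p => p.1 < l p.2)

/-- The row stabilizer `R_λ`: permutations of the shape preserving each row. -/
def rowStab : Finset (Equiv.Perm {p // p ∈ YoungShape l t}) :=
  univ.filter (fun π => ∀ y, ((π y : ℕ × ℕ)).2 = ((y : ℕ × ℕ)).2)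

/-- The row-equivalence class `{τ' : τ' ∼ τ}` of a tableau
`τ : Y(λ) → [m]`, consisting of the tableaux `τ ∘ r` for `r ∈ R_λ`. -/
def rowClass (τ : {p // p ∈ YoungShape l t} → Fin m) :
    Finset ({p // p ∈ YoungShape l t} → Fin m) :=
  (rowStab l t).image (fun r => fun y => τ (r y))

/-- Extension of a tableau to all of `ℕ × ℕ` (with junk value outside the
shape), convenient for indexing. -/
def extTab (hm : 0 < m) (τ : {p // p ∈ YoungShape l t} → Fin m) : ℕ × ℕ → Fin m :=
  fun p => if h : p ∈ YoungShape l t then τ ⟨p, h⟩ else ⟨0, hm⟩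

/-- The height `λ*_c` of column `c` of the shape. -/
def colHeight (c : ℕ) : ℕ := ((range t).filter (fun r => c < l r)).card

/-- The count function of a pair of tableaux `(τ', σ')` agrees with `κ`:
for each column height `t'` (with `1 ≤ t' ≤ t`) and each pair of patterns
`v, w ∈ [m]^{t'}`, `κ t' v w` is the number of columns `c` of height `t'` such
that `τ'(i,c) = v i` and `σ'(i,c) = w i` for all `i < t'`. -/
def HasCountFun (hm : 0 < m)
    (κ : (t' : ℕ) → (Fin t' → Fin m) → (Fin t' → Fin m) → ℕ)
    (τ' σ' : {p // p ∈ YoungShape l t} → Fin m) : Prop :=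
  ∀ t' ∈ Icc 1 t, ∀ v w : Fin t' → Fin m,
    κ t' v w = ((range (l 0)).filter (fun c =>
      colHeight l t c = t' ∧ ∀ i : Fin t',
        extTab l t m hm τ' (c, (i : ℕ)) = v i ∧
        extTab l t m hm σ' (c, (i : ℕ)) = w i)).card

instance (hm : 0 < m) (κ : (t' : ℕ) → (Fin t' → Fin m) → (Fin t' → Fin m) → ℕ)
    (τ' σ' : {p // p ∈ YoungShape l t} → Fin m) :
    Decidable (HasCountFun l t m hm κ τ' σ') := by
  unfold HasCountFun; infer_instance

end Tableaux

section ShapeLemmas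

variable {l : ℕ → ℕ} {t m : ℕ}

lemma mem_iff_lt_card_of_lower {S : Finset ℕ} (h : ∀ i ∈ S, ∀ j ≤ i, j ∈ S) :
    ∀ i, i ∈ S ↔ i < S.card := by
  intro i
  constructor
  · intro hi
    have hsub : range (i + 1) ⊆ S := fun j hj => h i hi j (Nat.lt_succ_iff.mp (mem_range.mp hj))
    have := Finset.card_le_card hsub
    simpa using this
  · intro hi
    by_contra hns
    have hsub : S ⊆ range i := by
      intro j hj
      rw [mem_range]
      by_contra hji
      exact hns (h j hj i (Nat.le_of_not_lt hji))
    have := Finset.card_le_card hsub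
    simp only [card_range] at this
    omega

lemma lt_colHeight_iff (hanti : Antitone l) (c i : ℕ) :
    i < colHeight l t c ↔ i < t ∧ c < l i := by
  have h := mem_iff_lt_card_of_lower (S := (range t).filter (fun r => c < l r))
    (fun a ha j hj => by
      simp only [mem_filter, mem_range] at ha ⊢
      exact ⟨lt_of_le_of_lt hj ha.1, lt_of_lt_of_le ha.2 (hanti hj)⟩) i
  rw [colHeight, ← h, mem_filter, mem_range]

lemma mem_youngShape_iff (hanti : Antitone l) {c i : ℕ} :
    (c, i) ∈ YoungShape l t ↔ i < t ∧ c < l i := by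
  simp only [YoungShape, mem_filter, mem_product, mem_range]
  constructor
  · rintro ⟨⟨-, h2⟩, h3⟩; exact ⟨h2, h3⟩
  · rintro ⟨h1, h2⟩
    exact ⟨⟨lt_of_lt_of_le h2 (hanti (Nat.zero_le i)), h1⟩, h2⟩

lemma colHeight_le : colHeight l t c ≤ t :=
  le_trans (Finset.card_le_card (filter_subset _ _)) (le_of_eq (card_range t))

lemma colHeight_eq_iff (hanti : Antitone l) (hl0 : ∀ r, t ≤ r → l r = 0)
    (hlpos : ∀ r, r < t → 0 < l r) {c : ℕ} {r : ℕ} (hr : r < t) :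
    colHeight l t c = r + 1 ↔ l (r + 1) ≤ c ∧ c < l r := by
  constructor
  · intro hq
    constructor
    · by_contra hlt
      push_neg at hlt
      have h1 : r + 1 < colHeight l t c := by
        rw [lt_colHeight_iff hanti]
        refine ⟨?_, hlt⟩
        by_contra ht
        rw [hl0 (r+1) (Nat.le_of_not_lt ht)] at hlt
        omega
      omega
    · have : r < colHeight l t c := by omega
      exact ((lt_colHeight_iff hanti c r).mp this).2
  · rintro ⟨h1, h2⟩
    have hr1 : r < colHeight l t c := (lt_colHeight_iff hanti c r).mpr ⟨hr, h2⟩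
    have hr2 : ¬ (r + 1 < colHeight l t c) := by
      rw [lt_colHeight_iff hanti]
      rintro ⟨-, hc⟩
      omega
    omega

end ShapeLemmas


section ColEquiv

/-- pattern pairs for columns of height `r+1` -/
abbrev PatPair (m : ℕ) {t : ℕ} (r : Fin t) : Type :=
  (Fin (r.1 + 1) → Fin m) × (Fin (r.1 + 1) → Fin m)

/-- columns of height exactly `r+1` -/
abbrev Cols (l : ℕ → ℕ) {t : ℕ} (r : Fin t) := {c // c ∈ Ico (l (r.1 + 1)) (l r.1)}

variable {l : ℕ → ℕ} {t m : ℕ}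

lemma shape_facts (hanti : Antitone l) (y : {p // p ∈ YoungShape l t}) :
    0 < colHeight l t y.1.1 ∧ colHeight l t y.1.1 ≤ t ∧
      y.1.2 < colHeight l t y.1.1 := by
  have hy : y.1.2 < t ∧ y.1.1 < l y.1.2 := by
    have := y.2
    rw [show y.1 = (y.1.1, y.1.2) from rfl, mem_youngShape_iff hanti] at this
    exact this
  have h1 : y.1.2 < colHeight l t y.1.1 := (lt_colHeight_iff hanti _ _).mpr hy
  exact ⟨by omega, colHeight_le, h1⟩

/-- the height-index of the column of a cell -/
def rowIdxD (hanti : Antitone l) (y : {p // p ∈ YoungShape l t}) : Fin t :=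
  ⟨colHeight l t y.1.1 - 1, by have := shape_facts hanti y; omega⟩

lemma rowIdxD_spec (hanti : Antitone l) (y : {p // p ∈ YoungShape l t}) :
    (rowIdxD hanti y).1 + 1 = colHeight l t y.1.1 := by
  have := shape_facts hanti y
  simp only [rowIdxD]
  omega

def colMemD (hanti : Antitone l) (hl0 : ∀ r, t ≤ r → l r = 0)
    (hlpos : ∀ r, r < t → 0 < l r)
    (y : {p // p ∈ YoungShape l t}) : Cols l (rowIdxD hanti y) :=
  ⟨y.1.1, by
    rw [mem_Ico]
    exact (colHeight_eq_iff hanti hl0 hlpos (c := y.1.1)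
      (r := (rowIdxD hanti y).1) (rowIdxD hanti y).2).mp (rowIdxD_spec hanti y).symm⟩

def idxD (hanti : Antitone l) (y : {p // p ∈ YoungShape l t}) :
    Fin ((rowIdxD hanti y).1 + 1) :=
  ⟨y.1.2, by rw [rowIdxD_spec hanti y]; exact (shape_facts hanti y).2.2⟩

lemma g_congr (g : (r : Fin t) → Cols l r → PatPair m r) {r r' : Fin t}
    (h : r' = r) {c : ℕ} (hc' : c ∈ Ico (l (r'.1 + 1)) (l r'.1))
    (hc : c ∈ Ico (l (r.1 + 1)) (l r.1)) {i : ℕ}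
    (hi' : i < r'.1 + 1) (hi : i < r.1 + 1) :
    (g r' ⟨c, hc'⟩).1 ⟨i, hi'⟩ = (g r ⟨c, hc⟩).1 ⟨i, hi⟩ ∧
    (g r' ⟨c, hc'⟩).2 ⟨i, hi'⟩ = (g r ⟨c, hc⟩).2 ⟨i, hi⟩ := by
  subst h; exact ⟨rfl, rfl⟩

/-- The main structural equivalence: a pair of tableaux corresponds to an
assignment, for each height class, of a pattern pair to each column. -/
def colEquiv (hanti : Antitone l) (hl0 : ∀ r, t ≤ r → l r = 0)
    (hlpos : ∀ r, r < t → 0 < l r) (hm : 0 < m) :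
    (({p // p ∈ YoungShape l t} → Fin m) × ({p // p ∈ YoungShape l t} → Fin m))
      ≃ ((r : Fin t) → Cols l r → PatPair m r) where
  toFun p := fun r c =>
    (fun i => extTab l t m hm p.1 (c.1, i.1), fun i => extTab l t m hm p.2 (c.1, i.1))
  invFun g :=
    (fun y => (g (rowIdxD hanti y) (colMemD hanti hl0 hlpos y)).1 (idxD hanti y),
     fun y => (g (rowIdxD hanti y) (colMemD hanti hl0 hlpos y)).2 (idxD hanti y))
  left_inv p := by
    have key : ∀ (f : {p // p ∈ YoungShape l t} → Fin m)
        (y : {p // p ∈ YoungShape l t}),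
        extTab l t m hm f ((colMemD hanti hl0 hlpos y).1, (idxD hanti y).1) = f y := by
      intro f y
      have h1 : ((colMemD hanti hl0 hlpos y).1, (idxD hanti y).1) = y.1 := by
        simp only [colMemD, idxD]
      rw [h1, extTab, dif_pos y.2]
    refine Prod.ext ?_ ?_ <;> funext y
    · exact key p.1 y
    · exact key p.2 y
  right_inv g := by
    funext r c
    have hmem : ∀ i : Fin (r.1 + 1), (c.1, i.1) ∈ YoungShape l t := by
      intro i
      rw [mem_youngShape_iff hanti]
      have hc := mem_Ico.mp c.2
      have : l r.1 ≤ l i.1 := hanti (by omega)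
      exact ⟨by omega, by omega⟩
    have hh : colHeight l t c.1 = r.1 + 1 :=
      (colHeight_eq_iff hanti hl0 hlpos r.2).mpr (mem_Ico.mp c.2)
    have main : ∀ i : Fin (r.1 + 1),
        ((g (rowIdxD hanti ⟨(c.1, i.1), hmem i⟩)
           (colMemD hanti hl0 hlpos ⟨(c.1, i.1), hmem i⟩)).1
           (idxD hanti ⟨(c.1, i.1), hmem i⟩) = (g r c).1 i) ∧
        ((g (rowIdxD hanti ⟨(c.1, i.1), hmem i⟩)
           (colMemD hanti hl0 hlpos ⟨(c.1, i.1), hmem i⟩)).2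
           (idxD hanti ⟨(c.1, i.1), hmem i⟩) = (g r c).2 i) := by
      intro i
      have hr : rowIdxD hanti (⟨(c.1, i.1), hmem i⟩ : {p // p ∈ YoungShape l t}) = r := by
        apply Fin.ext
        simp only [rowIdxD]
        simp only [hh]
        omega
      have h2 := g_congr g hr
        (colMemD hanti hl0 hlpos (⟨(c.1, i.1), hmem i⟩ : {p // p ∈ YoungShape l t})).2
        c.2 (idxD hanti (⟨(c.1, i.1), hmem i⟩ : {p // p ∈ YoungShape l t})).2 i.2
      constructor
      · refine Eq.trans ?_ (h2.1.trans ?_)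
        · congr 1 <;> simp [colMemD, idxD]
        · congr 1 <;> simp
      · refine Eq.trans ?_ (h2.2.trans ?_)
        · congr 1 <;> simp [colMemD, idxD]
        · congr 1 <;> simp
    refine Prod.ext ?_ ?_ <;> funext i
    · show (extTab l t m hm
          (fun y => (g (rowIdxD hanti y) (colMemD hanti hl0 hlpos y)).1 (idxD hanti y))
          (c.1, i.1)) = _
      rw [extTab, dif_pos (hmem i)]
      exact (main i).1
    · show (extTab l t m hm
          (fun y => (g (rowIdxD hanti y) (colMemD hanti hl0 hlpos y)).2 (idxD hanti y))
          (c.1, i.1)) = _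
      rw [extTab, dif_pos (hmem i)]
      exact (main i).2

end ColEquiv


section Translate

variable {l : ℕ → ℕ} {t m : ℕ}

lemma card_subtype_coe {α : Type*} (s : Finset α) (p : α → Prop) [DecidablePred p] :
    Fintype.card {x : {y // y ∈ s} // p ↑x} = (s.filter p).card := by
  classical
  rw [Fintype.card_subtype]
  apply Finset.card_nbij (fun (x : {y // y ∈ s}) => (x : α))
  · intro x hx
    simp only [mem_coe, mem_filter] at hx ⊢
    exact ⟨x.2, hx.2⟩
  · intro x _ y _ h
    exact Subtype.ext h
  · intro c hc
    simp only [Finset.coe_filter, Set.mem_setOf_eq, Set.mem_image] at hc ⊢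
    exact ⟨⟨c, hc.1⟩, by simp [hc.2], rfl⟩

lemma filter_height_eq (hanti : Antitone l) (hl0 : ∀ r, t ≤ r → l r = 0)
    (hlpos : ∀ r, r < t → 0 < l r) {r : ℕ} (hr : r < t)
    (Q : ℕ → Prop) [DecidablePred Q] :
    (range (l 0)).filter (fun c => colHeight l t c = r + 1 ∧ Q c)
      = (Ico (l (r + 1)) (l r)).filter (fun c => Q c) := by
  ext c
  simp only [mem_filter, mem_range, mem_Ico, colHeight_eq_iff hanti hl0 hlpos hr]
  constructor
  · rintro ⟨-, ⟨h1, h2⟩, h3⟩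
    exact ⟨⟨h1, h2⟩, h3⟩
  · rintro ⟨⟨h1, h2⟩, h3⟩
    have : l r ≤ l 0 := hanti (Nat.zero_le r)
    exact ⟨by omega, ⟨h1, h2⟩, h3⟩

lemma hasCountFun_iff_cond (hanti : Antitone l) (hl0 : ∀ r, t ≤ r → l r = 0)
    (hlpos : ∀ r, r < t → 0 < l r) (hm : 0 < m)
    (κ : (t' : ℕ) → (Fin t' → Fin m) → (Fin t' → Fin m) → ℕ)
    (τ' σ' : {p // p ∈ YoungShape l t} → Fin m) :
    HasCountFun l t m hm κ τ' σ' ↔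
      ∀ (r : Fin t) (p : PatPair m r),
        Fintype.card {c : Cols l r //
            colEquiv hanti hl0 hlpos hm (τ', σ') r c = p} = κ (r.1 + 1) p.1 p.2 := by
  have hcards : ∀ (r : Fin t) (p : PatPair m r),
      Fintype.card {c : Cols l r // colEquiv hanti hl0 hlpos hm (τ', σ') r c = p}
        = ((Ico (l (r.1 + 1)) (l r.1)).filter (fun c => ∀ i : Fin (r.1 + 1),
            extTab l t m hm τ' (c, i.1) = p.1 i ∧
            extTab l t m hm σ' (c, i.1) = p.2 i)).card := by
    intro r p
    rw [← card_subtype_coe]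
    apply Fintype.card_congr
    apply Equiv.subtypeEquivRight
    intro c
    show ((fun i => extTab l t m hm τ' ((c : ℕ), i.1),
          fun i => extTab l t m hm σ' ((c : ℕ), i.1)) : PatPair m r) = p ↔ _
    rw [Prod.ext_iff]
    simp only [funext_iff]
    rw [← forall_and]
  constructor
  · intro H r p
    rw [hcards]
    rw [H (r.1 + 1) (mem_Icc.mpr ⟨Nat.le_add_left 1 r.1, r.2⟩) p.1 p.2]
    rw [filter_height_eq hanti hl0 hlpos r.2]
  · intro H t' ht' v w
    rw [mem_Icc] at ht'
    obtain ⟨t'', rfl⟩ : ∃ t'', t' = t'' + 1 := ⟨t' - 1, by omega⟩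
    have hr : t'' < t := by omega
    have h1 := (hcards ⟨t'', hr⟩ (v, w)).symm.trans (H ⟨t'', hr⟩ (v, w))
    rw [← h1, filter_height_eq hanti hl0 hlpos hr]

end Translate

section Marginal

variable {l : ℕ → ℕ} {t m : ℕ}

lemma marginal_tau (hanti : Antitone l) (hl0 : ∀ r, t ≤ r → l r = 0)
    (hlpos : ∀ r, r < t → 0 < l r) (hm : 0 < m)
    (κ : (t' : ℕ) → (Fin t' → Fin m) → (Fin t' → Fin m) → ℕ)
    (τ' σ' : {p // p ∈ YoungShape l t} → Fin m)
    (H : HasCountFun l t m hm κ τ' σ') (i : ℕ) (hi : i < t) (s : Fin m) :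
    ((range (l i)).filter (fun c => extTab l t m hm τ' (c, i) = s)).card
      = ∑ t' ∈ Icc (i + 1) t, ∑ v : Fin t' → Fin m, ∑ w : Fin t' → Fin m,
          if h : i < t' then (if v ⟨i, h⟩ = s then κ t' v w else 0) else 0 := by
  classical
  set B := (range (l i)).filter (fun c => extTab l t m hm τ' (c, i) = s) with hB
  have step1 : B.card = ∑ t' ∈ Icc (i + 1) t,
      (B.filter (fun c => colHeight l t c = t')).card := by
    apply Finset.card_eq_sum_card_fiberwise
    intro c hc
    rw [hB, mem_coe, mem_filter, mem_range] at hc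
    rw [mem_coe, mem_Icc]
    have h1 : i < colHeight l t c := (lt_colHeight_iff hanti c i).mpr ⟨hi, hc.1⟩
    exact ⟨h1, colHeight_le⟩
  rw [step1]
  apply Finset.sum_congr rfl
  intro t' ht'
  rw [mem_Icc] at ht'
  have hit' : i < t' := ht'.1
  simp_rw [dif_pos hit']
  have hconv : (∑ p : (Fin t' → Fin m) × (Fin t' → Fin m),
      if p.1 ⟨i, hit'⟩ = s then κ t' p.1 p.2 else 0)
      = ∑ v : Fin t' → Fin m, ∑ w : Fin t' → Fin m,
          if v ⟨i, hit'⟩ = s then κ t' v w else 0 := Fintype.sum_prod_type _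
  rw [← hconv, ← Finset.sum_filter]
  set T : Finset ((Fin t' → Fin m) × (Fin t' → Fin m)) :=
    univ.filter (fun p => p.1 ⟨i, hit'⟩ = s) with hT
  have step2 : (B.filter (fun c => colHeight l t c = t')).card
      = ∑ p ∈ T, ((B.filter (fun c => colHeight l t c = t')).filter
          (fun c => ((fun j : Fin t' => extTab l t m hm τ' (c, j.1)),
            (fun j : Fin t' => extTab l t m hm σ' (c, j.1))) = p)).card := by
    apply Finset.card_eq_sum_card_fiberwise
    intro c hc
    rw [mem_coe, mem_filter, hB, mem_filter] at hc
    rw [hT, mem_coe, mem_filter]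
    exact ⟨mem_univ _, hc.1.2⟩
  rw [step2]
  apply Finset.sum_congr rfl
  intro p hp
  rw [hT, mem_filter] at hp
  rw [H t' (mem_Icc.mpr ⟨le_trans (Nat.le_add_left 1 i) ht'.1, ht'.2⟩) p.1 p.2]
  congr 1
  ext c
  simp only [mem_filter, hB, mem_range, Prod.ext_iff, funext_iff]
  constructor
  · rintro ⟨⟨⟨hc1, hc2⟩, hc3⟩, hc4, hc5⟩
    have : c < l 0 := lt_of_lt_of_le hc1 (hanti (Nat.zero_le i))
    exact ⟨this, hc3, fun j => ⟨hc4 j, hc5 j⟩⟩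
  · rintro ⟨hc1, hc2, hc3⟩
    have hcl : c < l i := by
      have : i < colHeight l t c := hc2 ▸ hit'
      exact ((lt_colHeight_iff hanti c i).mp this).2
    have hts : extTab l t m hm τ' (c, i) = s := by
      have := (hc3 ⟨i, hit'⟩).1
      rw [this]
      exact hp.2
    exact ⟨⟨⟨hcl, hts⟩, hc2⟩, fun j => (hc3 j).1, fun j => (hc3 j).2⟩

lemma rowcount_bridge (hanti : Antitone l) (hm : 0 < m)
    (f : {p // p ∈ YoungShape l t} → Fin m) {i : ℕ} (hi : i < t) (s : Fin m) :
    ((range (l i)).filter (fun c => extTab l t m hm f (c, i) = s)).card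
      = Fintype.card {y : {p // p ∈ YoungShape l t} // f y = s ∧ y.1.2 = i} := by
  classical
  rw [Fintype.card_subtype]
  symm
  apply Finset.card_nbij (fun y => y.1.1)
  · intro y hy
    simp only [mem_coe, mem_filter, mem_univ, true_and] at hy
    have hmem : y.1.2 < t ∧ y.1.1 < l y.1.2 := by
      have := y.2
      rwa [show y.1 = (y.1.1, y.1.2) from rfl, mem_youngShape_iff hanti] at this
    rw [mem_coe, mem_filter, mem_range]
    have h1 : (y.1.1, i) = y.1 := by
      rw [← hy.2]
    constructor
    · rw [← hy.2]; exact hmem.2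
    · rw [h1, extTab, dif_pos y.2]
      exact hy.1
  · intro y hy z hz hyz
    simp only [mem_coe, mem_filter, mem_univ, true_and] at hy hz
    apply Subtype.ext
    have : y.1.2 = z.1.2 := by rw [hy.2, hz.2]
    exact Prod.ext hyz this
  · intro c hc
    simp only [Finset.coe_filter, Set.mem_setOf_eq, mem_range] at hc
    have hmem : (c, i) ∈ YoungShape l t := (mem_youngShape_iff hanti).mpr ⟨hi, hc.1⟩
    refine ⟨⟨(c, i), hmem⟩, ?_, rfl⟩
    simp only [mem_coe, mem_filter, mem_univ, true_and]
    refine ⟨?_, trivial⟩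
    rw [show f ⟨(c, i), hmem⟩ = extTab l t m hm f (c, i) from by rw [extTab, dif_pos hmem]]
    exact hc.2

lemma mem_rowClass_iff (hanti : Antitone l) (hm : 0 < m)
    (τ τ' : {p // p ∈ YoungShape l t} → Fin m) :
    τ' ∈ rowClass l t m τ ↔ ∀ i : ℕ, i < t → ∀ s : Fin m,
      ((range (l i)).filter (fun c => extTab l t m hm τ' (c, i) = s)).card
        = ((range (l i)).filter (fun c => extTab l t m hm τ (c, i) = s)).card := by
  constructor
  · intro h i hi s
    rw [rowClass, mem_image] at h
    obtain ⟨r, hr, rfl⟩ := h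
    rw [rowStab, mem_filter] at hr
    rw [rowcount_bridge hanti hm _ hi, rowcount_bridge hanti hm _ hi]
    apply Fintype.card_congr
    apply Equiv.subtypeEquiv r
    intro y
    rw [hr.2 y]
  · intro h
    have hfib : ∀ b : Fin m × ℕ,
        Fintype.card {y : {p // p ∈ YoungShape l t} //
            (fun y => (τ' y, y.1.2)) y = b}
          = Fintype.card {y : {p // p ∈ YoungShape l t} //
            (fun y => (τ y, y.1.2)) y = b} := by
      rintro ⟨s, i⟩
      have conv1 : ∀ (f : {p // p ∈ YoungShape l t} → Fin m),
          Fintype.card {y : {p // p ∈ YoungShape l t} // (f y, y.1.2) = (s, i)}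
            = Fintype.card {y : {p // p ∈ YoungShape l t} // f y = s ∧ y.1.2 = i} := by
        intro f
        apply Fintype.card_congr
        apply Equiv.subtypeEquivRight
        intro y
        rw [Prod.ext_iff]
      rw [conv1, conv1]
      by_cases hi : i < t
      · rw [← rowcount_bridge hanti hm τ' hi s, ← rowcount_bridge hanti hm τ hi s]
        exact h i hi s
      · have empty : ∀ (f : {p // p ∈ YoungShape l t} → Fin m),
            Fintype.card {y : {p // p ∈ YoungShape l t} // f y = s ∧ y.1.2 = i} = 0 := by
          intro f
          rw [Fintype.card_eq_zero_iff]
          constructor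
          rintro ⟨y, -, hy2⟩
          have := y.2
          rw [show y.1 = (y.1.1, y.1.2) from rfl, mem_youngShape_iff hanti] at this
          omega
        rw [empty, empty]
    obtain ⟨e, he⟩ := existsPermOfFiberCards
      (fun y => (τ' y, y.1.2)) (fun y => (τ y, y.1.2)) hfib
    rw [rowClass, mem_image]
    refine ⟨e, ?_, ?_⟩
    · rw [rowStab, mem_filter]
      refine ⟨mem_univ _, fun y => ?_⟩
      have := congrFun he y
      simp only [Function.comp_apply, Prod.ext_iff] at this
      exact this.2.symm
    · funext y
      have := congrFun he y
      simp only [Function.comp_apply, Prod.ext_iff] at this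
      exact this.1.symm

end Marginal

section SwapLemma

variable {l : ℕ → ℕ} {t m : ℕ}

lemma hasCountFun_swap (hm : 0 < m)
    (κ : (t' : ℕ) → (Fin t' → Fin m) → (Fin t' → Fin m) → ℕ)
    (τ' σ' : {p // p ∈ YoungShape l t} → Fin m)
    (H : HasCountFun l t m hm κ τ' σ') :
    HasCountFun l t m hm (fun t' v w => κ t' w v) σ' τ' := by
  intro t' ht' v w
  show κ t' w v = _
  rw [H t' ht' w v]
  congr 1
  apply Finset.filter_congr
  intro c _
  constructor
  · rintro ⟨h1, h2⟩
    exact ⟨h1, fun i => ⟨(h2 i).2, (h2 i).1⟩⟩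
  · rintro ⟨h1, h2⟩
    exact ⟨h1, fun i => ⟨(h2 i).2, (h2 i).1⟩⟩

end SwapLemma

/-- total mass of the count function at a given height -/
def Kfun (m : ℕ) (κ : (t' : ℕ) → (Fin t' → Fin m) → (Fin t' → Fin m) → ℕ) (t' : ℕ) : ℕ :=
  ∑ v : Fin t' → Fin m, ∑ w : Fin t' → Fin m, κ t' v w


/-- fix a partition `λ ⊢ n` of height `t` (row lengths
`l 0 ≥ l 1 ≥ ⋯`, so `λ_i = l (i-1)` and `λ_{t+1} = l t = 0`) and tableaux
`τ, σ` with entries in `[m]`.  If a count function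
`κ : ⋃_{t'=1}^t ([m]^{t'} × [m]^{t'}) → ℕ` satisfies, for each row `i < t` and
each `s ∈ [m]`, `∑_{t'=i+1}^{t} ∑_{v,w ∈ [m]^{t'}, v_i = s} κ t' v w = ` (number
of entries equal to `s` in row `i` of `τ`) and the analogous condition for `σ`,
then the number of pairs `(τ', σ')` with `τ' ∼ τ`, `σ' ∼ σ` whose column-pattern
count function equals `κ` is `∏_{r<t} (λ_r − λ_{r+1})! / ∏_{t',v,w} κ(v,w)!`. -/
theorem card_pairs_with_count_function
    (n t m : ℕ) (hm : 0 < m) (l : ℕ → ℕ)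
    (hl0 : ∀ r, t ≤ r → l r = 0)
    (hlpos : ∀ r, r < t → 0 < l r)
    (hanti : Antitone l)
    (hsum : ∑ r ∈ range t, l r = n)
    (τ σ : {p // p ∈ YoungShape l t} → Fin m)
    (κ : (t' : ℕ) → (Fin t' → Fin m) → (Fin t' → Fin m) → ℕ)
    (hκτ : ∀ i : ℕ, i < t → ∀ s : Fin m,
      (∑ t' ∈ Icc (i + 1) t, ∑ v : Fin t' → Fin m, ∑ w : Fin t' → Fin m,
        if h : i < t' then (if v ⟨i, h⟩ = s then κ t' v w else 0) else 0)
      = ((range (l i)).filter (fun c => extTab l t m hm τ (c, i) = s)).card)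
    (hκσ : ∀ i : ℕ, i < t → ∀ s : Fin m,
      (∑ t' ∈ Icc (i + 1) t, ∑ v : Fin t' → Fin m, ∑ w : Fin t' → Fin m,
        if h : i < t' then (if w ⟨i, h⟩ = s then κ t' v w else 0) else 0)
      = ((range (l i)).filter (fun c => extTab l t m hm σ (c, i) = s)).card) :
    (((rowClass l t m τ) ×ˢ (rowClass l t m σ)).filter
        (fun p => HasCountFun l t m hm κ p.1 p.2)).card
      = (∏ r ∈ range t, (l r - l (r + 1)).factorial)
        / (∏ t' ∈ Icc 1 t, ∏ v : Fin t' → Fin m, ∏ w : Fin t' → Fin m,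
            (κ t' v w).factorial) := by
  classical
  -- total mass per height
  have hA : ∀ i, i < t → ∑ t' ∈ Icc (i + 1) t, Kfun m κ t' = l i := by
    intro i hi
    have h2 : ∑ s : Fin m, (∑ t' ∈ Icc (i + 1) t, ∑ v : Fin t' → Fin m,
          ∑ w : Fin t' → Fin m,
          if h : i < t' then (if v ⟨i, h⟩ = s then κ t' v w else 0) else 0)
        = ∑ t' ∈ Icc (i + 1) t, Kfun m κ t' := by
      rw [Finset.sum_comm]
      apply Finset.sum_congr rfl
      intro t' ht'
      rw [mem_Icc] at ht'
      have hit' : i < t' := by omega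
      simp_rw [dif_pos hit']
      rw [Finset.sum_comm]
      apply Finset.sum_congr rfl
      intro v _
      rw [Finset.sum_comm]
      apply Finset.sum_congr rfl
      intro w _
      simp [Finset.sum_ite_eq]
    have h3 : ∑ s : Fin m,
        ((range (l i)).filter (fun c => extTab l t m hm τ (c, i) = s)).card = l i := by
      rw [← Finset.card_eq_sum_card_fiberwise
        (f := fun c => extTab l t m hm τ (c, i)) (fun c _ => mem_univ _)]
      exact card_range _
    rw [← h2, Finset.sum_congr rfl (fun s _ => hκτ i hi s), h3]
  have hK : ∀ i, i < t → l i = Kfun m κ (i + 1) + l (i + 1) := by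
    intro i hi
    have h1 := hA i hi
    have hsplit : Icc (i + 1) t = insert (i + 1) (Icc (i + 2) t) := by
      ext x; simp only [mem_Icc, mem_insert]; omega
    rw [hsplit, Finset.sum_insert (by simp only [mem_Icc]; omega)] at h1
    by_cases h2 : i + 1 < t
    · rw [hA (i + 1) h2] at h1
      omega
    · have he : Icc (i + 2) t = ∅ := by
        rw [Finset.Icc_eq_empty_iff]; omega
      rw [he, Finset.sum_empty] at h1
      have := hl0 (i + 1) (by omega)
      omega
  -- restrict to the intrinsic condition
  have hQ : (((rowClass l t m τ) ×ˢ (rowClass l t m σ)).filter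
        (fun p => HasCountFun l t m hm κ p.1 p.2))
      = (univ.filter (fun p : ({p // p ∈ YoungShape l t} → Fin m) ×
          ({p // p ∈ YoungShape l t} → Fin m) => HasCountFun l t m hm κ p.1 p.2)) := by
    ext p
    simp only [mem_filter, mem_product, mem_univ, true_and]
    constructor
    · rintro ⟨-, h⟩; exact h
    · intro h
      refine ⟨⟨?_, ?_⟩, h⟩
      · rw [mem_rowClass_iff hanti hm]
        intro i hi s
        rw [marginal_tau hanti hl0 hlpos hm κ p.1 p.2 h i hi s, hκτ i hi s]
      · rw [mem_rowClass_iff hanti hm]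
        intro i hi s
        have hswap := hasCountFun_swap hm κ p.1 p.2 h
        rw [marginal_tau hanti hl0 hlpos hm _ p.2 p.1 hswap i hi s, ← hκσ i hi s]
        apply Finset.sum_congr rfl
        intro t' ht'
        rw [mem_Icc] at ht'
        have hit' : i < t' := by omega
        simp_rw [dif_pos hit']
        rw [Finset.sum_comm]
  rw [hQ]
  -- the chain of equivalences
  have e1 : {p : ({p // p ∈ YoungShape l t} → Fin m) ×
        ({p // p ∈ YoungShape l t} → Fin m) // HasCountFun l t m hm κ p.1 p.2}
      ≃ {g : (r : Fin t) → Cols l r → PatPair m r //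
          ∀ (r : Fin t) (pp : PatPair m r),
            Fintype.card {c : Cols l r // g r c = pp} = κ (r.1 + 1) pp.1 pp.2} :=
    Equiv.subtypeEquiv (colEquiv hanti hl0 hlpos hm)
      (fun p => hasCountFun_iff_cond hanti hl0 hlpos hm κ p.1 p.2)
  have e2 : {g : (r : Fin t) → Cols l r → PatPair m r //
          ∀ (r : Fin t) (pp : PatPair m r),
            Fintype.card {c : Cols l r // g r c = pp} = κ (r.1 + 1) pp.1 pp.2}
      ≃ ((r : Fin t) → {gr : Cols l r → PatPair m r //
          ∀ pp : PatPair m r,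
            Fintype.card {c : Cols l r // gr c = pp} = κ (r.1 + 1) pp.1 pp.2}) :=
    Equiv.subtypePiEquivPi (p := fun (r : Fin t) (gr : Cols l r → PatPair m r) =>
      ∀ pp : PatPair m r, Fintype.card {c : Cols l r // gr c = pp} = κ (r.1 + 1) pp.1 pp.2)
  have hchain : (univ.filter (fun p : ({p // p ∈ YoungShape l t} → Fin m) ×
          ({p // p ∈ YoungShape l t} → Fin m) => HasCountFun l t m hm κ p.1 p.2)).card
      = ∏ r : Fin t, Fintype.card {gr : Cols l r → PatPair m r //
          ∀ pp : PatPair m r,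
            Fintype.card {c : Cols l r // gr c = pp} = κ (r.1 + 1) pp.1 pp.2} := by
    rw [← Fintype.card_subtype, Fintype.card_congr (e1.trans e2), Fintype.card_pi]
  -- the per-height count
  have hper : ∀ r : Fin t,
      Fintype.card {gr : Cols l r → PatPair m r //
          ∀ pp : PatPair m r,
            Fintype.card {c : Cols l r // gr c = pp} = κ (r.1 + 1) pp.1 pp.2}
        * (∏ pp : PatPair m r, (κ (r.1 + 1) pp.1 pp.2).factorial)
      = (l r.1 - l (r.1 + 1)).factorial := by
    intro r
    have hcols : Fintype.card (Cols l r) = l r.1 - l (r.1 + 1) := by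
      rw [Fintype.card_coe, Nat.card_Ico]
    have hsum2 : ∑ pp : PatPair m r, κ (r.1 + 1) pp.1 pp.2 = Fintype.card (Cols l r) := by
      have h2 : (∑ pp : PatPair m r, κ (r.1 + 1) pp.1 pp.2)
          = ∑ v : Fin (r.1 + 1) → Fin m, ∑ w : Fin (r.1 + 1) → Fin m, κ (r.1 + 1) v w :=
        Fintype.sum_prod_type _
      have h3 : Kfun m κ (r.1 + 1)
          = ∑ v : Fin (r.1 + 1) → Fin m, ∑ w : Fin (r.1 + 1) → Fin m, κ (r.1 + 1) v w := rfl
      have h4 := hK r.1 r.2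
      rw [hcols, h2]
      clear e1 e2 hchain hQ
      omega
    have := card_funs_with_fiber_cards
      (κ := fun pp : PatPair m r => κ (r.1 + 1) pp.1 pp.2) hsum2
    rw [hcols] at this
    exact this
  have hmul : (∏ r : Fin t, Fintype.card {gr : Cols l r → PatPair m r //
          ∀ pp : PatPair m r,
            Fintype.card {c : Cols l r // gr c = pp} = κ (r.1 + 1) pp.1 pp.2})
        * (∏ r : Fin t, ∏ pp : PatPair m r, (κ (r.1 + 1) pp.1 pp.2).factorial)
      = ∏ r : Fin t, (l r.1 - l (r.1 + 1)).factorial := by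
    rw [← Finset.prod_mul_distrib]
    exact Finset.prod_congr rfl (fun r _ => hper r)
  have hX : (∏ r : Fin t, (l r.1 - l (r.1 + 1)).factorial)
      = ∏ r ∈ range t, (l r - l (r + 1)).factorial :=
    Fin.prod_univ_eq_prod_range (fun r => (l r - l (r + 1)).factorial) t
  have hY : (∏ r : Fin t, ∏ pp : PatPair m r, (κ (r.1 + 1) pp.1 pp.2).factorial)
      = ∏ t' ∈ Icc 1 t, ∏ v : Fin t' → Fin m, ∏ w : Fin t' → Fin m,
          (κ t' v w).factorial := by
    have h1 : (∏ r : Fin t, ∏ pp : PatPair m r, (κ (r.1 + 1) pp.1 pp.2).factorial)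
        = ∏ i ∈ range t, ∏ v : Fin (i + 1) → Fin m, ∏ w : Fin (i + 1) → Fin m,
            (κ (i + 1) v w).factorial :=
      (Finset.prod_congr rfl (fun (r : Fin t) _ =>
        Fintype.prod_prod_type (fun pp : PatPair m r => (κ (r.1 + 1) pp.1 pp.2).factorial))).trans
        (Fin.prod_univ_eq_prod_range (fun i => ∏ v : Fin (i + 1) → Fin m,
          ∏ w : Fin (i + 1) → Fin m, (κ (i + 1) v w).factorial) t)
    rw [h1, ← Finset.Ico_add_one_right_eq_Icc, Finset.prod_Ico_eq_prod_range]
    rw [show t + 1 - 1 = t from rfl]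
    apply Finset.prod_congr rfl
    intro i _
    rw [Nat.add_comm 1 i]
  have hYpos : 0 < ∏ t' ∈ Icc 1 t, ∏ v : Fin t' → Fin m, ∏ w : Fin t' → Fin m,
      (κ t' v w).factorial :=
    Finset.prod_pos (fun _ _ => Finset.prod_pos (fun _ _ =>
      Finset.prod_pos (fun _ _ => Nat.factorial_pos _)))
  rw [hchain]
  symm
  apply Nat.div_eq_of_eq_mul_left hYpos
  rw [← hX, ← hmul, hY]
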